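/- arXiv:2603.20665 — 4 statements merged into one kernel-verified Lean document; each statement's English description precedes it below -/
import Mathlib

section
/- Let Q : Λ → 𝒟 be measurable, μ a σ-finite measure on Λ, and P, R probability measures on Λ whose pushforwards QP and QR have densities p and r with respect to a σ-finite measure ν on 𝒟. If ρ_p is a probability density on Λ with respect to μ such that the pushforward of the measure ρ_p dμ by Q has ν-density τ with τ > 0 ν-a.e., then the functions λ ↦ p(Q(λ))·ρ_p(λ)/τ(Q(λ)) and λ ↦ r(Q(λ))·ρ_p(λ)/τ(Q(λ)) are probability densities with respect to μ, and the total variation distance between the corresponding probability measures equals the total variation distance between QP and QR. -/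
open MeasureTheory ENNReal

/-- Total variation distance: supremum over measurable sets. -/
noncomputable def tvDist {Ω : Type*} [MeasurableSpace Ω] (P R : Measure Ω) : ℝ :=
  ⨆ E : {s : Set Ω // MeasurableSet s}, |(P E.1).toReal - (R E.1).toReal|

section AuxLemmas

variable {Λ 𝒟 : Type*} [MeasurableSpace Λ] [MeasurableSpace 𝒟]

lemma scp_cov (Q : Λ → 𝒟) (hQ : Measurable Q) (μ : Measure Λ)
    (ρp : Λ → ℝ≥0∞) (hρp : Measurable ρp)
    (f : 𝒟 → ℝ≥0∞) (hf : Measurable f) (A : Set Λ) (hA : MeasurableSet A) :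
    ∫⁻ l in A, f (Q l) * ρp l ∂μ
      = ∫⁻ q, f q ∂(((μ.withDensity ρp).restrict A).map Q) := by
  rw [lintegral_map hf hQ, restrict_withDensity hA,
      lintegral_withDensity_eq_lintegral_mul _ hρp (g := fun a => f (Q a)) (hf.comp hQ)]
  exact lintegral_congr fun l => (mul_comm _ _)

lemma scp_wd_apply (Q : Λ → 𝒟) (hQ : Measurable Q) (μ : Measure Λ)
    (ρp : Λ → ℝ≥0∞) (hρp : Measurable ρp) (τ : 𝒟 → ℝ≥0∞) (hτ : Measurable τ)
    (f : 𝒟 → ℝ≥0∞) (hf : Measurable f) (A : Set Λ) (hA : MeasurableSet A) :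
    (μ.withDensity fun l => f (Q l) * ρp l / τ (Q l)) A
      = ∫⁻ q, f q / τ q ∂(((μ.withDensity ρp).restrict A).map Q) := by
  rw [withDensity_apply _ hA, ← scp_cov Q hQ μ ρp hρp (fun q => f q / τ q) (hf.div hτ) A hA]
  refine lintegral_congr fun l => ?_
  rw [div_eq_mul_inv, div_eq_mul_inv, mul_right_comm]

lemma scp_le (Q : Λ → 𝒟) (hQ : Measurable Q)
    (μ : Measure Λ) [SigmaFinite μ] (ν : Measure 𝒟) [SigmaFinite ν]
    (a b : 𝒟 → ℝ≥0∞) (ha : Measurable a) (hb : Measurable b)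
    (hafin : ∫⁻ q, a q ∂ν ≠ ∞) (hbfin : ∫⁻ q, b q ∂ν ≠ ∞)
    (ρp : Λ → ℝ≥0∞) (hρp : Measurable ρp) (hρp1 : ∫⁻ l, ρp l ∂μ = 1)
    (τ : 𝒟 → ℝ≥0∞) (hτ : Measurable τ)
    (hτmap : (μ.withDensity ρp).map Q = ν.withDensity τ)
    (hτae : ∀ᵐ q ∂ν, τ q ≠ 0 ∧ τ q ≠ ∞)
    (A : Set Λ) (hA : MeasurableSet A) :
    ((μ.withDensity fun l => a (Q l) * ρp l / τ (Q l)) A).toReal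
      - ((μ.withDensity fun l => b (Q l) * ρp l / τ (Q l)) A).toReal
    ≤ (∫⁻ q in {q | b q < a q}, a q ∂ν).toReal
      - (∫⁻ q in {q | b q < a q}, b q ∂ν).toReal := by
  haveI : IsFiniteMeasure (μ.withDensity ρp) := by
    constructor
    rw [withDensity_apply _ MeasurableSet.univ, setLIntegral_univ, hρp1]
    exact one_lt_top
  set κ : Measure 𝒟 := ((μ.withDensity ρp).restrict A).map Q with hκdef
  have hκle : κ ≤ ν.withDensity τ := by
    rw [← hτmap]; exact Measure.map_mono Measure.restrict_le_self hQ
  have hκν : κ ≪ ν :=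
    (Measure.absolutelyContinuous_of_le hκle).trans (withDensity_absolutelyContinuous ν τ)
  set σ : 𝒟 → ℝ≥0∞ := κ.rnDeriv ν with hσdef
  have hσmeas : Measurable σ := Measure.measurable_rnDeriv κ ν
  have hκeq : ν.withDensity σ = κ := Measure.withDensity_rnDeriv_eq κ ν hκν
  have hστ : σ ≤ᵐ[ν] τ := by
    refine ae_le_of_forall_setLIntegral_le_of_sigmaFinite hσmeas fun s hs _ => ?_
    calc ∫⁻ x in s, σ x ∂ν = κ s := by rw [← hκeq, withDensity_apply _ hs]
      _ ≤ (ν.withDensity τ) s := hκle s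
      _ = ∫⁻ x in s, τ x ∂ν := withDensity_apply _ hs
  set w : 𝒟 → ℝ≥0∞ := fun q => σ q / τ q with hwdef
  have hwmeas : Measurable w := hσmeas.div hτ
  have hw1 : ∀ᵐ q ∂ν, w q ≤ 1 := by
    filter_upwards [hστ, hτae] with q h1 h2
    rw [hwdef, ENNReal.div_le_iff h2.1 h2.2, one_mul]
    exact h1
  have hI : ∀ (f : 𝒟 → ℝ≥0∞), Measurable f →
      (μ.withDensity fun l => f (Q l) * ρp l / τ (Q l)) A = ∫⁻ q, f q * w q ∂ν := by
    intro f hf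
    rw [scp_wd_apply Q hQ μ ρp hρp τ hτ f hf A hA, ← hκdef, ← hκeq,
        lintegral_withDensity_eq_lintegral_mul _ hσmeas (g := fun q => f q / τ q)
          (hf.div hτ)]
    refine lintegral_congr fun q => ?_
    simp only [hwdef, Pi.mul_apply, div_eq_mul_inv]
    ring
  set E : Set 𝒟 := {q | b q < a q} with hEdef
  have hE : MeasurableSet E := measurableSet_lt hb ha
  have hmain : (∫⁻ q, a q * w q ∂ν) + ∫⁻ q in E, b q ∂ν
      ≤ (∫⁻ q, b q * w q ∂ν) + ∫⁻ q in E, a q ∂ν := by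
    rw [← lintegral_indicator hE, ← lintegral_indicator hE,
        ← lintegral_add_left (f := fun q => a q * w q) (ha.mul hwmeas),
        ← lintegral_add_left (f := fun q => b q * w q) (hb.mul hwmeas)]
    refine lintegral_mono_ae ?_
    filter_upwards [hw1] with q hw
    by_cases hq : q ∈ E
    · rw [Set.indicator_of_mem hq, Set.indicator_of_mem hq]
      have hba : b q ≤ a q := le_of_lt hq
      calc a q * w q + b q ≤ (b q + (a q - b q)) * w q + b q := by
            gcongr; exact le_add_tsub
        _ = b q * w q + (a q - b q) * w q + b q := by rw [add_mul]
        _ ≤ b q * w q + (a q - b q) * 1 + b q := by gcongr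
        _ = b q * w q + ((a q - b q) + b q) := by rw [mul_one, add_assoc]
        _ = b q * w q + a q := by rw [tsub_add_cancel_of_le hba]
    · rw [Set.indicator_of_notMem hq, Set.indicator_of_notMem hq]
      have hab : a q ≤ b q := not_lt.1 hq
      gcongr
  have hwle : ∀ (f : 𝒟 → ℝ≥0∞), (∫⁻ q, f q * w q ∂ν) ≤ ∫⁻ q, f q ∂ν := by
    intro f
    refine lintegral_mono_ae ?_
    filter_upwards [hw1] with q hw
    calc f q * w q ≤ f q * 1 := by gcongr
      _ = f q := mul_one _
  have hfa : (∫⁻ q, a q * w q ∂ν) ≠ ∞ := ((hwle a).trans_lt hafin.lt_top).ne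
  have hfb : (∫⁻ q, b q * w q ∂ν) ≠ ∞ := ((hwle b).trans_lt hbfin.lt_top).ne
  have hfEa : (∫⁻ q in E, a q ∂ν) ≠ ∞ :=
    ((setLIntegral_le_lintegral E a).trans_lt hafin.lt_top).ne
  have hfEb : (∫⁻ q in E, b q ∂ν) ≠ ∞ :=
    ((setLIntegral_le_lintegral E b).trans_lt hbfin.lt_top).ne
  rw [hI a ha, hI b hb]
  have h := (ENNReal.toReal_le_toReal (ENNReal.add_ne_top.2 ⟨hfa, hfEb⟩)
    (ENNReal.add_ne_top.2 ⟨hfb, hfEa⟩)).2 hmain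
  rw [ENNReal.toReal_add hfa hfEb, ENNReal.toReal_add hfb hfEa] at h
  linarith

lemma scp_preimage_apply (Q : Λ → 𝒟) (hQ : Measurable Q)
    (μ : Measure Λ) (ν : Measure 𝒟)
    (ρp : Λ → ℝ≥0∞) (hρp : Measurable ρp)
    (τ : 𝒟 → ℝ≥0∞) (hτ : Measurable τ)
    (hτmap : (μ.withDensity ρp).map Q = ν.withDensity τ)
    (hτae : ∀ᵐ q ∂ν, τ q ≠ 0 ∧ τ q ≠ ∞)
    (f : 𝒟 → ℝ≥0∞) (hf : Measurable f) (E : Set 𝒟) (hE : MeasurableSet E) :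
    (μ.withDensity fun l => f (Q l) * ρp l / τ (Q l)) (Q ⁻¹' E)
      = ∫⁻ q in E, f q ∂ν := by
  rw [scp_wd_apply Q hQ μ ρp hρp τ hτ f hf _ (hQ hE), ← Measure.restrict_map hQ hE,
      hτmap, restrict_withDensity hE,
      lintegral_withDensity_eq_lintegral_mul _ hτ (g := fun q => f q / τ q) (hf.div hτ)]
  refine lintegral_congr_ae ?_
  filter_upwards [ae_restrict_of_ae hτae] with q hq
  simp only [Pi.mul_apply]
  rw [mul_comm, ENNReal.div_mul_cancel hq.1 hq.2]

lemma abs_sub_toReal_le_one {Ω : Type*} [MeasurableSpace Ω] (m1 m2 : Measure Ω)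
    [IsProbabilityMeasure m1] [IsProbabilityMeasure m2] (s : Set Ω) :
    |(m1 s).toReal - (m2 s).toReal| ≤ 1 := by
  have h1 : (m1 s).toReal ≤ 1 := by
    simpa using ENNReal.toReal_mono one_ne_top prob_le_one
  have h2 : (m2 s).toReal ≤ 1 := by
    simpa using ENNReal.toReal_mono one_ne_top prob_le_one
  have h3 : (0:ℝ) ≤ (m1 s).toReal := ENNReal.toReal_nonneg
  have h4 : (0:ℝ) ≤ (m2 s).toReal := ENNReal.toReal_nonneg
  rw [abs_sub_le_iff]
  constructor <;> linarith

end AuxLemmas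

/-- the SCP densities are probability densities and the TV distance
between the SCP solutions equals the TV distance of the pushforwards. -/
theorem scp_density_and_tv_eq
    {Λ 𝒟 : Type*} [MeasurableSpace Λ] [MeasurableSpace 𝒟]
    (Q : Λ → 𝒟) (hQ : Measurable Q)
    (μ : Measure Λ) [SigmaFinite μ] (ν : Measure 𝒟) [SigmaFinite ν]
    (P R : Measure Λ) [IsProbabilityMeasure P] [IsProbabilityMeasure R]
    (p r : 𝒟 → ℝ≥0∞) (hp : Measurable p) (hr : Measurable r)
    (hPmap : P.map Q = ν.withDensity p) (hRmap : R.map Q = ν.withDensity r)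
    (ρp : Λ → ℝ≥0∞) (hρp : Measurable ρp) (hρp1 : ∫⁻ l, ρp l ∂μ = 1)
    (τ : 𝒟 → ℝ≥0∞) (hτ : Measurable τ)
    (hτmap : (μ.withDensity ρp).map Q = ν.withDensity τ)
    (hτpos : ∀ᵐ q ∂ν, 0 < τ q) :
    (∫⁻ l, p (Q l) * ρp l / τ (Q l) ∂μ = 1) ∧
    (∫⁻ l, r (Q l) * ρp l / τ (Q l) ∂μ = 1) ∧
    tvDist (μ.withDensity (fun l => p (Q l) * ρp l / τ (Q l)))
           (μ.withDensity (fun l => r (Q l) * ρp l / τ (Q l)))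
      = tvDist (P.map Q) (R.map Q) := by
  -- τ is a.e. finite and positive
  have hτint : ∫⁻ q, τ q ∂ν = 1 := by
    have : (ν.withDensity τ) Set.univ = 1 := by
      rw [← hτmap, Measure.map_apply hQ MeasurableSet.univ, Set.preimage_univ,
          withDensity_apply _ MeasurableSet.univ, setLIntegral_univ, hρp1]
    rwa [withDensity_apply _ MeasurableSet.univ, setLIntegral_univ] at this
  have hτae : ∀ᵐ q ∂ν, τ q ≠ 0 ∧ τ q ≠ ∞ := by
    filter_upwards [hτpos, ae_lt_top hτ (by rw [hτint]; exact one_ne_top)] with q h1 h2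
    exact ⟨h1.ne', h2.ne⟩
  -- integrals of p and r
  have hpint : ∫⁻ q, p q ∂ν = 1 := by
    have : (ν.withDensity p) Set.univ = 1 := by
      rw [← hPmap]; simp [Measure.map_apply hQ MeasurableSet.univ]
    rwa [withDensity_apply _ MeasurableSet.univ, setLIntegral_univ] at this
  have hrint : ∫⁻ q, r q ∂ν = 1 := by
    have : (ν.withDensity r) Set.univ = 1 := by
      rw [← hRmap]; simp [Measure.map_apply hQ MeasurableSet.univ]
    rwa [withDensity_apply _ MeasurableSet.univ, setLIntegral_univ] at this
  have hkey : ∀ (f : 𝒟 → ℝ≥0∞), Measurable f → ∀ (E : Set 𝒟), MeasurableSet E →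
      (μ.withDensity fun l => f (Q l) * ρp l / τ (Q l)) (Q ⁻¹' E) = ∫⁻ q in E, f q ∂ν :=
    fun f hf E hE => scp_preimage_apply Q hQ μ ν ρp hρp τ hτ hτmap hτae f hf E hE
  have h1 : ∫⁻ l, p (Q l) * ρp l / τ (Q l) ∂μ = 1 := by
    have := hkey p hp Set.univ MeasurableSet.univ
    rwa [Set.preimage_univ, withDensity_apply _ MeasurableSet.univ, setLIntegral_univ,
      setLIntegral_univ, hpint] at this
  have h2 : ∫⁻ l, r (Q l) * ρp l / τ (Q l) ∂μ = 1 := by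
    have := hkey r hr Set.univ MeasurableSet.univ
    rwa [Set.preimage_univ, withDensity_apply _ MeasurableSet.univ, setLIntegral_univ,
      setLIntegral_univ, hrint] at this
  refine ⟨h1, h2, ?_⟩
  set Ph := μ.withDensity (fun l => p (Q l) * ρp l / τ (Q l)) with hPh
  set Rh := μ.withDensity (fun l => r (Q l) * ρp l / τ (Q l)) with hRh
  haveI : IsProbabilityMeasure Ph := by
    constructor
    rw [hPh, withDensity_apply _ MeasurableSet.univ, setLIntegral_univ, h1]
  haveI : IsProbabilityMeasure Rh := by
    constructor
    rw [hRh, withDensity_apply _ MeasurableSet.univ, setLIntegral_univ, h2]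
  haveI : IsProbabilityMeasure (P.map Q) := Measure.isProbabilityMeasure_map hQ.aemeasurable
  haveI : IsProbabilityMeasure (R.map Q) := Measure.isProbabilityMeasure_map hQ.aemeasurable
  haveI : Nonempty {s : Set Λ // MeasurableSet s} := ⟨⟨Set.univ, MeasurableSet.univ⟩⟩
  haveI : Nonempty {s : Set 𝒟 // MeasurableSet s} := ⟨⟨Set.univ, MeasurableSet.univ⟩⟩
  have bddD : BddAbove (Set.range fun E : {s : Set 𝒟 // MeasurableSet s} =>
      |((P.map Q) E.1).toReal - ((R.map Q) E.1).toReal|) := by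
    refine ⟨1, ?_⟩
    rintro x ⟨E, rfl⟩
    exact abs_sub_toReal_le_one _ _ _
  have bddL : BddAbove (Set.range fun E : {s : Set Λ // MeasurableSet s} =>
      |(Ph E.1).toReal - (Rh E.1).toReal|) := by
    refine ⟨1, ?_⟩
    rintro x ⟨E, rfl⟩
    exact abs_sub_toReal_le_one _ _ _
  refine le_antisymm ?_ ?_
  · -- tvDist Ph Rh ≤ tvDist (P.map Q) (R.map Q)
    refine ciSup_le ?_
    rintro ⟨A, hA⟩
    rw [abs_sub_le_iff]
    constructor
    · refine le_trans (scp_le Q hQ μ ν p r hp hr (by rw [hpint]; exact one_ne_top)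
        (by rw [hrint]; exact one_ne_top) ρp hρp hρp1 τ hτ hτmap hτae A hA) ?_
      have hE : MeasurableSet {q | r q < p q} := measurableSet_lt hr hp
      have e1 : (P.map Q) {q | r q < p q} = ∫⁻ q in {q | r q < p q}, p q ∂ν := by
        rw [hPmap, withDensity_apply _ hE]
      have e2 : (R.map Q) {q | r q < p q} = ∫⁻ q in {q | r q < p q}, r q ∂ν := by
        rw [hRmap, withDensity_apply _ hE]
      calc (∫⁻ q in {q | r q < p q}, p q ∂ν).toReal
            - (∫⁻ q in {q | r q < p q}, r q ∂ν).toReal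
          ≤ |((P.map Q) {q | r q < p q}).toReal - ((R.map Q) {q | r q < p q}).toReal| := by
            rw [e1, e2]; exact le_abs_self _
        _ ≤ tvDist (P.map Q) (R.map Q) := le_ciSup bddD ⟨{q | r q < p q}, hE⟩
    · refine le_trans (scp_le Q hQ μ ν r p hr hp (by rw [hrint]; exact one_ne_top)
        (by rw [hpint]; exact one_ne_top) ρp hρp hρp1 τ hτ hτmap hτae A hA) ?_
      have hE : MeasurableSet {q | p q < r q} := measurableSet_lt hp hr
      have e1 : (P.map Q) {q | p q < r q} = ∫⁻ q in {q | p q < r q}, p q ∂ν := by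
        rw [hPmap, withDensity_apply _ hE]
      have e2 : (R.map Q) {q | p q < r q} = ∫⁻ q in {q | p q < r q}, r q ∂ν := by
        rw [hRmap, withDensity_apply _ hE]
      calc (∫⁻ q in {q | p q < r q}, r q ∂ν).toReal
            - (∫⁻ q in {q | p q < r q}, p q ∂ν).toReal
          ≤ |((P.map Q) {q | p q < r q}).toReal - ((R.map Q) {q | p q < r q}).toReal| := by
            rw [e1, e2, abs_sub_comm]; exact le_abs_self _
        _ ≤ tvDist (P.map Q) (R.map Q) := le_ciSup bddD ⟨{q | p q < r q}, hE⟩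
  · -- tvDist (P.map Q) (R.map Q) ≤ tvDist Ph Rh
    refine ciSup_le ?_
    rintro ⟨E, hE⟩
    have e1 : (P.map Q) E = Ph (Q ⁻¹' E) := by
      rw [hPmap, withDensity_apply _ hE, hPh, hkey p hp E hE]
    have e2 : (R.map Q) E = Rh (Q ⁻¹' E) := by
      rw [hRmap, withDensity_apply _ hE, hRh, hkey r hr E hE]
    calc |((P.map Q) E).toReal - ((R.map Q) E).toReal|
        = |(Ph (Q ⁻¹' E)).toReal - (Rh (Q ⁻¹' E)).toReal| := by rw [e1, e2]
      _ ≤ tvDist Ph Rh := le_ciSup bddL ⟨Q ⁻¹' E, hQ hE⟩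
end

section
/- With the same setup, the total variation distance between the SCP solutions satisfies d_TV(p̂, r̂) = d_TV(QP, QR) ≤ d_TV(P, R); in particular the SCP solution operator is non-expansive and uniformly continuous in the total variation metric. -/
open MeasureTheory ENNReal

lemma tv_bdd {Ω : Type*} [MeasurableSpace Ω] (P R : Measure Ω)
    [IsProbabilityMeasure P] [IsProbabilityMeasure R] :
    BddAbove (Set.range fun E : {s : Set Ω // MeasurableSet s} =>
      |(P E.1).toReal - (R E.1).toReal|) := by
  refine ⟨1, ?_⟩
  rintro x ⟨E, rfl⟩
  have h1 : (P E.1).toReal ≤ 1 := by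
    have := ENNReal.toReal_mono one_ne_top (prob_le_one (μ := P) (s := E.1))
    simpa using this
  have h2 : (R E.1).toReal ≤ 1 := by
    have := ENNReal.toReal_mono one_ne_top (prob_le_one (μ := R) (s := E.1))
    simpa using this
  have h3 : (0:ℝ) ≤ (P E.1).toReal := ENNReal.toReal_nonneg
  have h4 : (0:ℝ) ≤ (R E.1).toReal := ENNReal.toReal_nonneg
  rw [abs_le]; constructor <;> linarith

lemma tv_half {α : Type*} [MeasurableSpace α] (m : Measure α) (f g : α → ℝ≥0∞)
    (hf : Measurable f) (hg : Measurable g) (E D : Set α)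
    (hE : MeasurableSet E) (hD : MeasurableSet D)
    (hmem : ∀ x ∈ D, g x ≤ f x) (hnmem : ∀ x ∉ D, f x ≤ g x) :
    (m.withDensity f) E + (m.withDensity g) D
      ≤ (m.withDensity f) D + (m.withDensity g) E := by
  rw [withDensity_apply _ hE, withDensity_apply _ hD, withDensity_apply _ hD,
    withDensity_apply _ hE, ← lintegral_indicator hE _, ← lintegral_indicator hD _,
    ← lintegral_indicator hD _, ← lintegral_indicator hE _,
    ← lintegral_add_left (hf.indicator hE), ← lintegral_add_left (hf.indicator hD)]
  refine lintegral_mono fun x => ?_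
  by_cases hx : x ∈ D <;> by_cases hx' : x ∈ E <;>
    simp [Set.indicator_of_mem, Set.indicator_of_notMem, hx, hx']
  · exact hmem x hx
  · exact hnmem x hx

lemma toReal_sub_le_sub {a b c d : ℝ≥0∞} (ha : a ≠ ∞) (hb : b ≠ ∞) (hc : c ≠ ∞)
    (hd : d ≠ ∞) (h : a + d ≤ c + b) : a.toReal - b.toReal ≤ c.toReal - d.toReal := by
  have h2 := ENNReal.toReal_mono (ENNReal.add_ne_top.2 ⟨hc, hb⟩) h
  rw [ENNReal.toReal_add ha hd, ENNReal.toReal_add hc hb] at h2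
  linarith

/-- d_TV(p̂, r̂) = d_TV(QP, QR) ≤ d_TV(P, R): the SCP solution
operator is non-expansive in the total variation metric. -/
theorem scp_tv_stability
    {Λ 𝒟 : Type*} [MeasurableSpace Λ] [MeasurableSpace 𝒟]
    (Q : Λ → 𝒟) (hQ : Measurable Q)
    (μ : Measure Λ) [SigmaFinite μ] (ν : Measure 𝒟) [SigmaFinite ν]
    (P R : Measure Λ) [IsProbabilityMeasure P] [IsProbabilityMeasure R]
    (p r : 𝒟 → ℝ≥0∞) (hp : Measurable p) (hr : Measurable r)
    (hPmap : P.map Q = ν.withDensity p) (hRmap : R.map Q = ν.withDensity r)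
    (ρp : Λ → ℝ≥0∞) (hρp : Measurable ρp) (hρp1 : ∫⁻ l, ρp l ∂μ = 1)
    (τ : 𝒟 → ℝ≥0∞) (hτ : Measurable τ)
    (hτmap : (μ.withDensity ρp).map Q = ν.withDensity τ)
    (hτpos : ∀ᵐ q ∂ν, 0 < τ q) :
    tvDist (μ.withDensity (fun l => p (Q l) * ρp l / τ (Q l)))
           (μ.withDensity (fun l => r (Q l) * ρp l / τ (Q l)))
      = tvDist (P.map Q) (R.map Q) ∧
    tvDist (P.map Q) (R.map Q) ≤ tvDist P R := by
  haveI : Nonempty {s : Set Λ // MeasurableSet s} := ⟨⟨∅, MeasurableSet.empty⟩⟩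
  haveI : Nonempty {s : Set 𝒟 // MeasurableSet s} := ⟨⟨∅, MeasurableSet.empty⟩⟩
  haveI : IsProbabilityMeasure (P.map Q) := Measure.isProbabilityMeasure_map hQ.aemeasurable
  haveI : IsProbabilityMeasure (R.map Q) := Measure.isProbabilityMeasure_map hQ.aemeasurable
  -- change of variables
  have key : ∀ f : 𝒟 → ℝ≥0∞, Measurable f →
      ∫⁻ l, f (Q l) * ρp l ∂μ = ∫⁻ q, f q * τ q ∂ν := by
    intro f hf
    have h1 : ∫⁻ l, f (Q l) ∂(μ.withDensity ρp) = ∫⁻ l, (ρp * fun l => f (Q l)) l ∂μ :=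
      lintegral_withDensity_eq_lintegral_mul μ hρp (hf.comp hQ)
    have h2 : ∫⁻ q, f q ∂(ν.withDensity τ) = ∫⁻ q, (τ * f) q ∂ν :=
      lintegral_withDensity_eq_lintegral_mul ν hτ hf
    have h3 : ∫⁻ q, f q ∂((μ.withDensity ρp).map Q) = ∫⁻ l, f (Q l) ∂(μ.withDensity ρp) :=
      lintegral_map hf hQ
    rw [hτmap, h2, h1] at h3
    calc ∫⁻ l, f (Q l) * ρp l ∂μ = ∫⁻ l, (ρp * fun l => f (Q l)) l ∂μ := by
          simp [mul_comm]
      _ = ∫⁻ q, (τ * f) q ∂ν := h3.symm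
      _ = ∫⁻ q, f q * τ q ∂ν := by simp [mul_comm]
  -- τ finite a.e.
  have hτint : ∫⁻ q, τ q ∂ν = 1 := by
    have h1 : (ν.withDensity τ) Set.univ = ((μ.withDensity ρp).map Q) Set.univ := by
      rw [hτmap]
    rw [Measure.map_apply hQ MeasurableSet.univ] at h1
    simp only [Set.preimage_univ, withDensity_apply _ MeasurableSet.univ,
      Measure.restrict_univ] at h1
    rw [h1, hρp1]
  have hτlt : ∀ᵐ q ∂ν, τ q < ∞ := ae_lt_top hτ (by rw [hτint]; exact one_ne_top)
  -- pushforward of SCP densities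
  have hB : ∀ (f : 𝒟 → ℝ≥0∞), Measurable f → ∀ A : Set 𝒟, MeasurableSet A →
      (μ.withDensity fun l => f (Q l) * ρp l / τ (Q l)) (Q ⁻¹' A)
        = (ν.withDensity f) A := by
    intro f hf A hA
    have hdf : Measurable fun l => f (Q l) * ρp l / τ (Q l) :=
      ((hf.comp hQ).mul hρp).div (hτ.comp hQ)
    rw [withDensity_apply _ (hQ hA), withDensity_apply _ hA,
      ← lintegral_indicator (hQ hA) _, ← lintegral_indicator hA _]
    calc ∫⁻ l, (Q ⁻¹' A).indicator (fun l => f (Q l) * ρp l / τ (Q l)) l ∂μ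
        = ∫⁻ l, (A.indicator fun q => f q / τ q) (Q l) * ρp l ∂μ := by
          refine lintegral_congr fun l => ?_
          by_cases h : Q l ∈ A
          · simp only [Set.indicator_of_mem, h, Set.mem_preimage,
              Set.indicator_of_mem (h : Q l ∈ A)]
            rw [div_eq_mul_inv, div_eq_mul_inv, mul_right_comm]
          · simp [Set.indicator_of_notMem, h, Set.mem_preimage]
      _ = ∫⁻ q, (A.indicator fun q => f q / τ q) q * τ q ∂ν :=
          key _ ((hf.div hτ).indicator hA)
      _ = ∫⁻ q, A.indicator f q ∂ν := by
          refine lintegral_congr_ae ?_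
          filter_upwards [hτpos, hτlt] with q h0 hlt
          by_cases h : q ∈ A
          · simp only [Set.indicator_of_mem, h]
            exact ENNReal.div_mul_cancel h0.ne' hlt.ne
          · simp [Set.indicator_of_notMem, h]
  set Ph := μ.withDensity fun l => p (Q l) * ρp l / τ (Q l) with hPh
  set Rh := μ.withDensity fun l => r (Q l) * ρp l / τ (Q l) with hRh
  have hBP : ∀ A : Set 𝒟, MeasurableSet A → Ph (Q ⁻¹' A) = P.map Q A := by
    intro A hA; rw [hPh, hB p hp A hA, hPmap]
  have hBR : ∀ A : Set 𝒟, MeasurableSet A → Rh (Q ⁻¹' A) = R.map Q A := by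
    intro A hA; rw [hRh, hB r hr A hA, hRmap]
  haveI : IsProbabilityMeasure Ph := by
    constructor
    have := hBP Set.univ MeasurableSet.univ
    simp only [Set.preimage_univ] at this
    rw [this]; exact measure_univ
  haveI : IsProbabilityMeasure Rh := by
    constructor
    have := hBR Set.univ MeasurableSet.univ
    simp only [Set.preimage_univ] at this
    rw [this]; exact measure_univ
  have hfin : ∀ (m : Measure Λ) [IsProbabilityMeasure m], ∀ s : Set Λ, m s ≠ ∞ :=
    fun m _ s => measure_ne_top m s
  have hfin' : ∀ (m : Measure 𝒟) [IsProbabilityMeasure m], ∀ s : Set 𝒟, m s ≠ ∞ :=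
    fun m _ s => measure_ne_top m s
  constructor
  · -- equality of TV distances
    apply le_antisymm
    · apply ciSup_le
      rintro ⟨E, hE⟩
      rw [abs_sub_le_iff]
      constructor
      · -- use D = Q⁻¹' {q | r q ≤ p q}
        set S : Set 𝒟 := {q | r q ≤ p q} with hS
        have hSm : MeasurableSet S := measurableSet_le hr hp
        have h1 : Ph E + Rh (Q ⁻¹' S) ≤ Ph (Q ⁻¹' S) + Rh E := by
          refine tv_half μ _ _ (((hp.comp hQ).mul hρp).div (hτ.comp hQ))
            (((hr.comp hQ).mul hρp).div (hτ.comp hQ)) E (Q ⁻¹' S) hE (hQ hSm) ?_ ?_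
          · intro x hx
            exact ENNReal.div_le_div_right (mul_le_mul_left hx (ρp x)) _
          · intro x hx
            have : p (Q x) ≤ r (Q x) := le_of_lt (lt_of_not_ge hx)
            exact ENNReal.div_le_div_right (mul_le_mul_left this (ρp x)) _
        have h2 : (Ph E).toReal - (Rh E).toReal
            ≤ (P.map Q S).toReal - (R.map Q S).toReal := by
          rw [← hBP S hSm, ← hBR S hSm]
          exact toReal_sub_le_sub (measure_ne_top _ _) (measure_ne_top _ _)
            (measure_ne_top _ _) (measure_ne_top _ _) h1
        refine h2.trans ?_
        refine (le_abs_self _).trans ?_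
        exact le_ciSup (tv_bdd (P.map Q) (R.map Q)) ⟨S, hSm⟩
      · set S : Set 𝒟 := {q | p q ≤ r q} with hS
        have hSm : MeasurableSet S := measurableSet_le hp hr
        have h1 : Rh E + Ph (Q ⁻¹' S) ≤ Rh (Q ⁻¹' S) + Ph E := by
          refine tv_half μ _ _ (((hr.comp hQ).mul hρp).div (hτ.comp hQ))
            (((hp.comp hQ).mul hρp).div (hτ.comp hQ)) E (Q ⁻¹' S) hE (hQ hSm) ?_ ?_
          · intro x hx
            exact ENNReal.div_le_div_right (mul_le_mul_left hx (ρp x)) _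
          · intro x hx
            have : r (Q x) ≤ p (Q x) := le_of_lt (lt_of_not_ge hx)
            exact ENNReal.div_le_div_right (mul_le_mul_left this (ρp x)) _
        have h2 : (Rh E).toReal - (Ph E).toReal
            ≤ (R.map Q S).toReal - (P.map Q S).toReal := by
          rw [← hBP S hSm, ← hBR S hSm]
          exact toReal_sub_le_sub (measure_ne_top _ _) (measure_ne_top _ _)
            (measure_ne_top _ _) (measure_ne_top _ _) h1
        refine h2.trans ?_
        calc (R.map Q S).toReal - (P.map Q S).toReal
            ≤ |(P.map Q S).toReal - (R.map Q S).toReal| := by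
              rw [abs_sub_comm]; exact le_abs_self _
          _ ≤ _ := le_ciSup (tv_bdd (P.map Q) (R.map Q)) ⟨S, hSm⟩
    · apply ciSup_le
      rintro ⟨A, hA⟩
      rw [← hBP A hA, ← hBR A hA]
      exact le_ciSup (tv_bdd Ph Rh) ⟨Q ⁻¹' A, hQ hA⟩
  · apply ciSup_le
    rintro ⟨A, hA⟩
    rw [Measure.map_apply hQ hA, Measure.map_apply hQ hA]
    exact le_ciSup (tv_bdd P R) ⟨Q ⁻¹' A, hQ hA⟩
end

section
/- Let {Pᵢ} be a sequence of probability measures on Λ with μ-densities pᵢ, and P* a probability measure with μ-density p*, such that pᵢ(λ) → p*(λ) for μ-a.e. λ. Then the SCP solutions satisfy d_TV(p̂ᵢ, p̂*) → 0, i.e. pointwise a.e. convergence of trial-generating densities implies total variation convergence of the SCP solutions. -/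
open MeasureTheory ENNReal Filter

/-- Scheffé's lemma in ENNReal form. -/
lemma scheffe_aux {α : Type*} [MeasurableSpace α] (μ : Measure α)
    (f : ℕ → α → ℝ≥0∞) (g : α → ℝ≥0∞)
    (hf : ∀ i, Measurable (f i)) (hg : Measurable g)
    (hfi : ∀ i, ∫⁻ x, f i x ∂μ = 1) (hgi : ∫⁻ x, g x ∂μ = 1)
    (hconv : ∀ᵐ x ∂μ, Tendsto (fun i => f i x) atTop (nhds (g x))) :
    Tendsto (fun i => ∫⁻ x, (f i x - g x) + (g x - f i x) ∂μ) atTop (nhds 0) := by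
  have hgfin : ∀ᵐ x ∂μ, g x ≠ ∞ :=
    (ae_lt_top hg (by rw [hgi]; exact one_ne_top)).mono fun x h => h.ne
  have h1 : Tendsto (fun i => ∫⁻ x, g x - f i x ∂μ) atTop (nhds 0) := by
    have := tendsto_lintegral_of_dominated_convergence (μ := μ)
      (F := fun i x => g x - f i x) (f := fun _ => (0 : ℝ≥0∞)) g
      (fun i => (hg.sub (hf i)))
      (fun i => Filter.Eventually.of_forall fun x => tsub_le_self)
      (by rw [hgi]; exact one_ne_top) ?_
    · simpa using this
    · filter_upwards [hconv, hgfin] with x hx hfin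
      have : Tendsto (fun i => g x - f i x) atTop (nhds (g x - g x)) :=
        ENNReal.Tendsto.sub tendsto_const_nhds hx (Or.inl hfin)
      simpa using this
  have hmfin : ∀ i, ∫⁻ x, min (f i x) (g x) ∂μ ≠ ∞ := fun i =>
    ne_top_of_le_ne_top one_ne_top
      ((lintegral_mono fun x => min_le_right _ _).trans_eq hgi)
  have key : ∀ i, ∫⁻ x, f i x - g x ∂μ = ∫⁻ x, g x - f i x ∂μ := by
    intro i
    have e1 : ∫⁻ x, f i x - g x ∂μ + ∫⁻ x, min (f i x) (g x) ∂μ = 1 := by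
      rw [← lintegral_add_left (f := fun x => f i x - g x) ((hf i).sub hg), ← hfi i]
      refine lintegral_congr fun x => ?_
      rcases le_total (f i x) (g x) with h | h
      · simp [tsub_eq_zero_of_le h, min_eq_left h]
      · rw [min_eq_right h, tsub_add_cancel_of_le h]
    have e2 : ∫⁻ x, g x - f i x ∂μ + ∫⁻ x, min (f i x) (g x) ∂μ = 1 := by
      rw [← lintegral_add_left (f := fun x => g x - f i x) (hg.sub (hf i)), ← hgi]
      refine lintegral_congr fun x => ?_
      rcases le_total (g x) (f i x) with h | h
      · simp [tsub_eq_zero_of_le h, min_eq_right h]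
      · rw [min_eq_left h, tsub_add_cancel_of_le h]
    have := e1.trans e2.symm
    exact (ENNReal.add_left_inj (hmfin i)).mp this
  have h2 : Tendsto (fun i => ∫⁻ x, g x - f i x ∂μ + ∫⁻ x, g x - f i x ∂μ)
      atTop (nhds 0) := by
    simpa using h1.add h1
  refine h2.congr fun i => ?_
  rw [lintegral_add_left (f := fun x => f i x - g x) ((hf i).sub hg), key i]

/-- One-sided L¹ contraction of densities under pushforward. -/
lemma tsub_lintegral_map_le {Λ 𝒟 : Type*} [MeasurableSpace Λ] [MeasurableSpace 𝒟]
    (Q : Λ → 𝒟) (hQ : Measurable Q) (μ : Measure Λ) (ν : Measure 𝒟)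
    (f g : Λ → ℝ≥0∞) (hf : Measurable f) (hg : Measurable g)
    (a b : 𝒟 → ℝ≥0∞) (ha : Measurable a) (hb : Measurable b)
    (hfa : (μ.withDensity f).map Q = ν.withDensity a)
    (hgb : (μ.withDensity g).map Q = ν.withDensity b)
    (hbfin : ∫⁻ q, b q ∂ν ≠ ∞) :
    ∫⁻ q, a q - b q ∂ν ≤ ∫⁻ l, f l - g l ∂μ := by
  set A : Set 𝒟 := {q | b q ≤ a q} with hA
  have hAmeas : MeasurableSet A := measurableSet_le hb ha
  have step1 : ∫⁻ q, a q - b q ∂ν = ∫⁻ q in A, a q - b q ∂ν := by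
    rw [← lintegral_indicator hAmeas]
    refine lintegral_congr fun q => ?_
    by_cases h : q ∈ A
    · simp [Set.indicator_of_mem h]
    · rw [Set.indicator_of_notMem h]
      have hle : ¬ b q ≤ a q := h
      exact tsub_eq_zero_of_le (le_of_not_ge hle)
  have hbfin' : ∫⁻ q in A, b q ∂ν ≠ ∞ :=
    ne_top_of_le_ne_top hbfin (setLIntegral_le_lintegral _ _)
  have step2 : ∫⁻ q in A, a q - b q ∂ν = ∫⁻ q in A, a q ∂ν - ∫⁻ q in A, b q ∂ν := by
    refine lintegral_sub hb hbfin' ?_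
    exact (ae_restrict_mem hAmeas).mono fun q hq => hq
  have hAa : ∫⁻ q in A, a q ∂ν = ∫⁻ l in Q ⁻¹' A, f l ∂μ := by
    rw [← withDensity_apply a hAmeas, ← hfa, Measure.map_apply hQ hAmeas,
      withDensity_apply f (hQ hAmeas)]
  have hAb : ∫⁻ q in A, b q ∂ν = ∫⁻ l in Q ⁻¹' A, g l ∂μ := by
    rw [← withDensity_apply b hAmeas, ← hgb, Measure.map_apply hQ hAmeas,
      withDensity_apply g (hQ hAmeas)]
  calc ∫⁻ q, a q - b q ∂ν
      = ∫⁻ l in Q ⁻¹' A, f l ∂μ - ∫⁻ l in Q ⁻¹' A, g l ∂μ := by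
        rw [step1, step2, hAa, hAb]
    _ ≤ ∫⁻ l in Q ⁻¹' A, f l - g l ∂μ := lintegral_sub_le' _ _ hg.aemeasurable
    _ ≤ ∫⁻ l, f l - g l ∂μ := setLIntegral_le_lintegral _ _

/-- Local limit theorem: pointwise a.e. convergence of
trial-generating densities implies TV convergence of the SCP solutions. -/
theorem scp_local_limit
    {Λ 𝒟 : Type*} [MeasurableSpace Λ] [MeasurableSpace 𝒟]
    (Q : Λ → 𝒟) (hQ : Measurable Q)
    (μ : Measure Λ) [SigmaFinite μ] (ν : Measure 𝒟) [SigmaFinite ν]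
    (P : ℕ → Measure Λ) (Pstar : Measure Λ)
    [∀ i, IsProbabilityMeasure (P i)] [IsProbabilityMeasure Pstar]
    (pLam : ℕ → Λ → ℝ≥0∞) (pLamStar : Λ → ℝ≥0∞)
    (hpLam : ∀ i, Measurable (pLam i)) (hpLamStar : Measurable pLamStar)
    (hPdens : ∀ i, P i = μ.withDensity (pLam i))
    (hPstarDens : Pstar = μ.withDensity pLamStar)
    (ρD : ℕ → 𝒟 → ℝ≥0∞) (ρDstar : 𝒟 → ℝ≥0∞)
    (hρD : ∀ i, Measurable (ρD i)) (hρDstar : Measurable ρDstar)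
    (hmap : ∀ i, (P i).map Q = ν.withDensity (ρD i))
    (hmapStar : Pstar.map Q = ν.withDensity ρDstar)
    (ρp : Λ → ℝ≥0∞) (hρp : Measurable ρp) (hρp1 : ∫⁻ l, ρp l ∂μ = 1)
    (τ : 𝒟 → ℝ≥0∞) (hτ : Measurable τ)
    (hτmap : (μ.withDensity ρp).map Q = ν.withDensity τ)
    (hτpos : ∀ᵐ q ∂ν, 0 < τ q)
    (hconv : ∀ᵐ l ∂μ, Tendsto (fun i => pLam i l) atTop (nhds (pLamStar l))) :
    Tendsto (fun i =>
        tvDist (μ.withDensity (fun l => ρD i (Q l) * ρp l / τ (Q l)))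
               (μ.withDensity (fun l => ρDstar (Q l) * ρp l / τ (Q l))))
      atTop (nhds 0) := by
  -- basic normalizations
  have hpi1 : ∀ i, ∫⁻ l, pLam i l ∂μ = 1 := by
    intro i
    have := measure_univ (μ := P i)
    rw [hPdens i, withDensity_apply _ MeasurableSet.univ, setLIntegral_univ] at this
    exact this
  have hps1 : ∫⁻ l, pLamStar l ∂μ = 1 := by
    have := measure_univ (μ := Pstar)
    rw [hPstarDens, withDensity_apply _ MeasurableSet.univ, setLIntegral_univ] at this
    exact this
  have hρDi1 : ∀ i, ∫⁻ q, ρD i q ∂ν = 1 := by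
    intro i
    have : ((P i).map Q) Set.univ = 1 := by
      rw [Measure.map_apply hQ MeasurableSet.univ]; simp
    rw [hmap i, withDensity_apply _ MeasurableSet.univ, setLIntegral_univ] at this
    exact this
  have hρDs1 : ∫⁻ q, ρDstar q ∂ν = 1 := by
    have : (Pstar.map Q) Set.univ = 1 := by
      rw [Measure.map_apply hQ MeasurableSet.univ]; simp
    rw [hmapStar, withDensity_apply _ MeasurableSet.univ, setLIntegral_univ] at this
    exact this
  have hτ1 : ∫⁻ q, τ q ∂ν = 1 := by
    have : ((μ.withDensity ρp).map Q) Set.univ = 1 := by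
      rw [Measure.map_apply hQ MeasurableSet.univ, Set.preimage_univ,
        withDensity_apply _ MeasurableSet.univ, setLIntegral_univ, hρp1]
    rw [hτmap, withDensity_apply _ MeasurableSet.univ, setLIntegral_univ] at this
    exact this
  have hτfin : ∀ᵐ q ∂ν, τ q ≠ ∞ :=
    (ae_lt_top hτ (by rw [hτ1]; exact one_ne_top)).mono fun q h => h.ne
  -- key transfer identity
  have key : ∀ g : 𝒟 → ℝ≥0∞, Measurable g →
      ∫⁻ l, g (Q l) * ρp l / τ (Q l) ∂μ = ∫⁻ q, g q ∂ν := by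
    intro g hgm
    have hdiv : Measurable fun q => g q / τ q := hgm.div hτ
    calc ∫⁻ l, g (Q l) * ρp l / τ (Q l) ∂μ
        = ∫⁻ l, (ρp * fun l => g (Q l) / τ (Q l)) l ∂μ := by
          refine lintegral_congr fun l => ?_
          simp only [Pi.mul_apply, div_eq_mul_inv]
          ring
      _ = ∫⁻ l, g (Q l) / τ (Q l) ∂(μ.withDensity ρp) :=
          (lintegral_withDensity_eq_lintegral_mul μ hρp
            ((hgm.comp hQ).div (hτ.comp hQ))).symm
      _ = ∫⁻ q, g q / τ q ∂((μ.withDensity ρp).map Q) := (lintegral_map hdiv hQ).symm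
      _ = ∫⁻ q, g q / τ q ∂(ν.withDensity τ) := by rw [hτmap]
      _ = ∫⁻ q, (τ * fun q => g q / τ q) q ∂ν :=
          lintegral_withDensity_eq_lintegral_mul ν hτ hdiv
      _ = ∫⁻ q, g q ∂ν := by
          refine lintegral_congr_ae ?_
          filter_upwards [hτpos, hτfin] with q h0 hfin
          simp only [Pi.mul_apply]
          rw [mul_comm, ENNReal.div_mul_cancel h0.ne' hfin]
  -- distances
  set δ : ℕ → ℝ≥0∞ := fun i =>
    ∫⁻ l, (pLam i l - pLamStar l) + (pLamStar l - pLam i l) ∂μ with hδdef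
  set D : ℕ → 𝒟 → ℝ≥0∞ := fun i q => (ρD i q - ρDstar q) + (ρDstar q - ρD i q) with hDdef
  have hDmeas : ∀ i, Measurable (D i) := fun i =>
    ((hρD i).sub hρDstar).add (hρDstar.sub (hρD i))
  set η : ℕ → ℝ≥0∞ := fun i => ∫⁻ q, D i q ∂ν with hηdef
  have hδ0 : Tendsto δ atTop (nhds 0) :=
    scheffe_aux μ pLam pLamStar hpLam hpLamStar hpi1 hps1 hconv
  have hηδ : ∀ i, η i ≤ δ i := by
    intro i
    have l1 : ∫⁻ q, ρD i q - ρDstar q ∂ν ≤ ∫⁻ l, pLam i l - pLamStar l ∂μ := by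
      refine tsub_lintegral_map_le Q hQ μ ν (pLam i) pLamStar (hpLam i) hpLamStar
        (ρD i) ρDstar (hρD i) hρDstar ?_ ?_ (by rw [hρDs1]; exact one_ne_top)
      · rw [← hPdens i]; exact hmap i
      · rw [← hPstarDens]; exact hmapStar
    have l2 : ∫⁻ q, ρDstar q - ρD i q ∂ν ≤ ∫⁻ l, pLamStar l - pLam i l ∂μ := by
      refine tsub_lintegral_map_le Q hQ μ ν pLamStar (pLam i) hpLamStar (hpLam i)
        ρDstar (ρD i) hρDstar (hρD i) ?_ ?_ (by rw [hρDi1 i]; exact one_ne_top)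
      · rw [← hPstarDens]; exact hmapStar
      · rw [← hPdens i]; exact hmap i
    have eη : η i = ∫⁻ q, ρD i q - ρDstar q ∂ν + ∫⁻ q, ρDstar q - ρD i q ∂ν :=
      lintegral_add_left ((hρD i).sub hρDstar) _
    have eδ : δ i = ∫⁻ l, pLam i l - pLamStar l ∂μ + ∫⁻ l, pLamStar l - pLam i l ∂μ :=
      lintegral_add_left ((hpLam i).sub hpLamStar) _
    rw [eη, eδ]
    exact add_le_add l1 l2
  have hδfin : ∀ i, δ i ≠ ∞ := by
    intro i
    have eδ : δ i = ∫⁻ l, pLam i l - pLamStar l ∂μ + ∫⁻ l, pLamStar l - pLam i l ∂μ :=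
      lintegral_add_left ((hpLam i).sub hpLamStar) _
    have b1 : ∫⁻ l, pLam i l - pLamStar l ∂μ ≤ 1 :=
      (lintegral_mono fun l => tsub_le_self).trans_eq (hpi1 i)
    have b2 : ∫⁻ l, pLamStar l - pLam i l ∂μ ≤ 1 :=
      (lintegral_mono fun l => tsub_le_self).trans_eq hps1
    have : δ i ≤ 2 := by
      rw [eδ]
      exact (add_le_add b1 b2).trans_eq one_add_one_eq_two
    exact ne_top_of_le_ne_top (by norm_num) this
  have hηfin : ∀ i, η i ≠ ∞ := fun i => ne_top_of_le_ne_top (hδfin i) (hηδ i)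
  -- measurability of SCP densities
  have hfmeas : ∀ i, Measurable fun l => ρD i (Q l) * ρp l / τ (Q l) :=
    fun i => (((hρD i).comp hQ).mul hρp).div (hτ.comp hQ)
  have hfsmeas : Measurable fun l => ρDstar (Q l) * ρp l / τ (Q l) :=
    ((hρDstar.comp hQ).mul hρp).div (hτ.comp hQ)
  -- total masses
  have htot : ∀ i, ∫⁻ l, ρD i (Q l) * ρp l / τ (Q l) ∂μ = 1 := by
    intro i; rw [key (ρD i) (hρD i), hρDi1 i]
  have htots : ∫⁻ l, ρDstar (Q l) * ρp l / τ (Q l) ∂μ = 1 := by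
    rw [key ρDstar hρDstar, hρDs1]
  -- the D transfer
  have hDtrans : ∀ i, ∫⁻ l, D i (Q l) * ρp l / τ (Q l) ∂μ = η i := by
    intro i; rw [key (D i) (hDmeas i)]
  -- main per-set bound
  have hEbound : ∀ i (E : Set Λ) (_ : MeasurableSet E),
      |((μ.withDensity fun l => ρD i (Q l) * ρp l / τ (Q l)) E).toReal -
       ((μ.withDensity fun l => ρDstar (Q l) * ρp l / τ (Q l)) E).toReal| ≤ (η i).toReal := by
    intro i E hEm
    set a := (μ.withDensity fun l => ρD i (Q l) * ρp l / τ (Q l)) E with hadef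
    set b := (μ.withDensity fun l => ρDstar (Q l) * ρp l / τ (Q l)) E with hbdef
    have haE : a = ∫⁻ l in E, ρD i (Q l) * ρp l / τ (Q l) ∂μ := withDensity_apply _ hEm
    have hbE : b = ∫⁻ l in E, ρDstar (Q l) * ρp l / τ (Q l) ∂μ := withDensity_apply _ hEm
    have hafin : a ≠ ∞ := by
      rw [haE]
      exact ne_top_of_le_ne_top (by rw [htot i]; exact one_ne_top)
        (setLIntegral_le_lintegral _ _)
    have hbfin : b ≠ ∞ := by
      rw [hbE]
      exact ne_top_of_le_ne_top (by rw [htots]; exact one_ne_top)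
        (setLIntegral_le_lintegral _ _)
    have hDint : ∫⁻ l in E, D i (Q l) * ρp l / τ (Q l) ∂μ ≤ η i := by
      rw [← hDtrans i]; exact setLIntegral_le_lintegral _ _
    have hab : a ≤ b + η i := by
      rw [haE, hbE]
      calc ∫⁻ l in E, ρD i (Q l) * ρp l / τ (Q l) ∂μ
          ≤ ∫⁻ l in E, ρDstar (Q l) * ρp l / τ (Q l) + D i (Q l) * ρp l / τ (Q l) ∂μ := by
            refine lintegral_mono fun l => ?_
            have h1 : ρD i (Q l) ≤ ρDstar (Q l) + D i (Q l) := by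
              calc ρD i (Q l) ≤ ρDstar (Q l) + (ρD i (Q l) - ρDstar (Q l)) := le_add_tsub
                _ ≤ _ := by
                  rw [hDdef]
                  exact add_le_add_right (le_add_of_le_of_nonneg le_rfl (zero_le)) _
            calc ρD i (Q l) * ρp l / τ (Q l)
                ≤ (ρDstar (Q l) + D i (Q l)) * ρp l / τ (Q l) :=
                  ENNReal.div_le_div_right (mul_le_mul_left h1 _) _
              _ = _ := by rw [add_mul, ENNReal.add_div]
        _ = ∫⁻ l in E, ρDstar (Q l) * ρp l / τ (Q l) ∂μ
            + ∫⁻ l in E, D i (Q l) * ρp l / τ (Q l) ∂μ :=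
            lintegral_add_left hfsmeas _
        _ ≤ _ := add_le_add_right hDint _
    have hba : b ≤ a + η i := by
      rw [haE, hbE]
      calc ∫⁻ l in E, ρDstar (Q l) * ρp l / τ (Q l) ∂μ
          ≤ ∫⁻ l in E, ρD i (Q l) * ρp l / τ (Q l) + D i (Q l) * ρp l / τ (Q l) ∂μ := by
            refine lintegral_mono fun l => ?_
            have h1 : ρDstar (Q l) ≤ ρD i (Q l) + D i (Q l) := by
              calc ρDstar (Q l) ≤ ρD i (Q l) + (ρDstar (Q l) - ρD i (Q l)) := le_add_tsub
                _ ≤ _ := by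
                  rw [hDdef]
                  exact add_le_add_right (le_add_of_nonneg_of_le (zero_le) le_rfl) _
            calc ρDstar (Q l) * ρp l / τ (Q l)
                ≤ (ρD i (Q l) + D i (Q l)) * ρp l / τ (Q l) :=
                  ENNReal.div_le_div_right (mul_le_mul_left h1 _) _
              _ = _ := by rw [add_mul, ENNReal.add_div]
        _ = ∫⁻ l in E, ρD i (Q l) * ρp l / τ (Q l) ∂μ
            + ∫⁻ l in E, D i (Q l) * ρp l / τ (Q l) ∂μ :=
            lintegral_add_left (hfmeas i) _
        _ ≤ _ := add_le_add_right hDint _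
    rw [abs_le]
    constructor
    · rw [neg_le, neg_sub, sub_le_iff_le_add]
      calc b.toReal ≤ (a + η i).toReal := ENNReal.toReal_mono
            (by exact ENNReal.add_ne_top.mpr ⟨hafin, hηfin i⟩) hba
        _ = (η i).toReal + a.toReal := by
          rw [ENNReal.toReal_add hafin (hηfin i)]; ring
    · rw [sub_le_iff_le_add]
      calc a.toReal ≤ (b + η i).toReal := ENNReal.toReal_mono
            (by exact ENNReal.add_ne_top.mpr ⟨hbfin, hηfin i⟩) hab
        _ = (η i).toReal + b.toReal := by
          rw [ENNReal.toReal_add hbfin (hηfin i)]; ring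
  -- assemble
  have hbddAbove : ∀ i, BddAbove (Set.range fun E : {s : Set Λ // MeasurableSet s} =>
      |((μ.withDensity fun l => ρD i (Q l) * ρp l / τ (Q l)) E.1).toReal -
       ((μ.withDensity fun l => ρDstar (Q l) * ρp l / τ (Q l)) E.1).toReal|) := by
    intro i
    refine ⟨(η i).toReal, ?_⟩
    rintro r ⟨E, rfl⟩
    exact hEbound i E.1 E.2
  have h0le : ∀ i, 0 ≤ tvDist (μ.withDensity fun l => ρD i (Q l) * ρp l / τ (Q l))
      (μ.withDensity fun l => ρDstar (Q l) * ρp l / τ (Q l)) := by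
    intro i
    have := le_ciSup (hbddAbove i) ⟨∅, MeasurableSet.empty⟩
    simpa [tvDist] using this.trans_eq' (by simp)
  have hupper : ∀ i, tvDist (μ.withDensity fun l => ρD i (Q l) * ρp l / τ (Q l))
      (μ.withDensity fun l => ρDstar (Q l) * ρp l / τ (Q l)) ≤ (δ i).toReal := by
    intro i
    refine ciSup_le fun E => ?_
    exact (hEbound i E.1 E.2).trans (ENNReal.toReal_mono (hδfin i) (hηδ i))
  have hδreal : Tendsto (fun i => (δ i).toReal) atTop (nhds 0) := by
    have := (ENNReal.tendsto_toReal (a := 0) (by simp)).comp hδ0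
    simpa [Function.comp_def] using this
  exact tendsto_of_tendsto_of_tendsto_of_le_of_le tendsto_const_nhds hδreal h0le hupper
end

section
/- Let τ : 𝒟 → [0,∞) be continuous on a metric space 𝒟, and ν* a Borel probability measure with ν*({τ = 0}) = 0. If νᵢ → ν* weakly and gᵢ, g are bounded Borel functions with |g| ≤ C·τ pointwise (for some C > 0), setting h_k = (g/τ)·χ_{{τ > 1/k}}, then for every ε > 0 there exists k with: (a) |∫ h_k dν* − L*| ≤ ε where L* = ∫_{τ>0} (g/τ) dν*, and (b) limsup_i |∫ h_k dνᵢ − ∫_{τ>0} (g/τ) dνᵢ| ≤ ε, provided each νᵢ({τ = 0}) = 0. -/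
open MeasureTheory Filter

/-- truncation lemma for ratios g/τ under weak convergence. -/
theorem truncation_lemma
    {𝒟 : Type*} [MetricSpace 𝒟] [MeasurableSpace 𝒟] [BorelSpace 𝒟]
    (τ : 𝒟 → ℝ) (hτcont : Continuous τ) (hτ0 : ∀ q, 0 ≤ τ q)
    (ν : ℕ → Measure 𝒟) (νstar : Measure 𝒟)
    [∀ i, IsProbabilityMeasure (ν i)] [IsProbabilityMeasure νstar]
    (hνstarnull : νstar {q | τ q = 0} = 0)
    (hνnull : ∀ i, ν i {q | τ q = 0} = 0)
    (hconv : ∀ f : 𝒟 → ℝ, Continuous f → (∃ C, ∀ q, |f q| ≤ C) →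
      Tendsto (fun i => ∫ q, f q ∂(ν i)) atTop (nhds (∫ q, f q ∂νstar)))
    (g : 𝒟 → ℝ) (hg : Measurable g) (C : ℝ) (hC : 0 < C)
    (hgbound : ∀ q, |g q| ≤ C * τ q) :
    ∀ ε > (0 : ℝ), ∃ k : ℕ, 0 < k ∧
      |(∫ q, Set.indicator {q | 1 / (k : ℝ) < τ q} (fun q => g q / τ q) q ∂νstar) -
        ∫ q in {q | 0 < τ q}, g q / τ q ∂νstar| ≤ ε ∧
      limsup (fun i =>
        |(∫ q, Set.indicator {q | 1 / (k : ℝ) < τ q} (fun q => g q / τ q) q ∂(ν i)) -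
          ∫ q in {q | 0 < τ q}, g q / τ q ∂(ν i)|) atTop ≤ ε := by
  intro ε hε
  set h : 𝒟 → ℝ := fun q => g q / τ q with hh
  have hhm : Measurable h := hg.div hτcont.measurable
  have hhb : ∀ q, |h q| ≤ C := by
    intro q
    rcases eq_or_lt_of_le (hτ0 q) with h0 | h0
    · have hg0 : g q = 0 := by
        have := hgbound q
        rw [← h0, mul_zero] at this
        exact abs_eq_zero.mp (le_antisymm this (abs_nonneg _))
      simp [hh, hg0, hC.le]
    · rw [hh]
      simp only
      rw [abs_div, abs_of_pos h0, div_le_iff₀ h0]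
      exact hgbound q
  have hint : ∀ (μ : Measure 𝒟), IsFiniteMeasure μ → Integrable h μ := by
    intro μ hμ
    exact (integrable_const C).mono' hhm.aestronglyMeasurable
      (Filter.Eventually.of_forall fun q => by simpa using hhb q)
  -- key quantitative bound
  have key : ∀ (μ : Measure 𝒟), IsProbabilityMeasure μ →
      ∀ c : ℝ, 0 < c →
      |(∫ q, Set.indicator {q | c < τ q} h q ∂μ) - ∫ q in {q | 0 < τ q}, h q ∂μ|
        ≤ C * (μ {q | τ q ≤ c}).toReal := by
    intro μ hμ c hc
    have msA : MeasurableSet {q | c < τ q} := measurableSet_lt measurable_const hτcont.measurable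
    have msB : MeasurableSet {q | 0 < τ q ∧ τ q ≤ c} :=
      (measurableSet_lt measurable_const hτcont.measurable).inter
        (measurableSet_le hτcont.measurable measurable_const)
    haveI := hμ
    have hI := hint μ inferInstance
    have hsplit : {q | 0 < τ q} = {q | c < τ q} ∪ {q | 0 < τ q ∧ τ q ≤ c} := by
      ext q
      constructor
      · intro hq
        rcases le_or_gt (τ q) c with h1 | h1
        · exact Or.inr ⟨hq, h1⟩
        · exact Or.inl h1
      · rintro (hq | hq)
        · exact lt_trans hc hq
        · exact hq.1
    have hdisj : Disjoint {q | c < τ q} {q | 0 < τ q ∧ τ q ≤ c} := by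
      rw [Set.disjoint_left]
      rintro q hq ⟨_, hq2⟩
      exact absurd hq2 (not_le.mpr hq)
    rw [integral_indicator msA, hsplit,
      MeasureTheory.setIntegral_union hdisj msB hI.integrableOn hI.integrableOn]
    have : |(∫ q in {q | c < τ q}, h q ∂μ) -
        ((∫ q in {q | c < τ q}, h q ∂μ) + ∫ q in {q | 0 < τ q ∧ τ q ≤ c}, h q ∂μ)|
        = |∫ q in {q | 0 < τ q ∧ τ q ≤ c}, h q ∂μ| := by
      rw [sub_add_eq_sub_sub, sub_self, zero_sub, abs_neg]
    rw [this]
    calc |∫ q in {q | 0 < τ q ∧ τ q ≤ c}, h q ∂μ|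
        ≤ C * (μ {q | 0 < τ q ∧ τ q ≤ c}).toReal := by
          have := norm_setIntegral_le_of_norm_le_const (μ := μ) (s := {q | 0 < τ q ∧ τ q ≤ c})
            (f := h) (C := C) (measure_lt_top μ _) (fun x _ => by simpa using hhb x)
          simpa [measureReal_def] using this
      _ ≤ C * (μ {q | τ q ≤ c}).toReal := by
          refine mul_le_mul_of_nonneg_left ?_ hC.le
          exact ENNReal.toReal_mono (measure_ne_top μ _)
            (measure_mono fun q hq => hq.2)
  -- choose k
  have hAnti : Antitone (fun k : ℕ => {q | τ q ≤ 2 / ((k : ℝ) + 1)}) := by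
    intro m n hmn q hq
    simp only [Set.mem_setOf_eq] at hq ⊢
    refine le_trans hq ?_
    have hmn' : (m : ℝ) ≤ (n : ℝ) := Nat.cast_le.mpr hmn
    gcongr
  have hiInter : (⋂ k : ℕ, {q | τ q ≤ 2 / ((k : ℝ) + 1)}) = {q | τ q = 0} := by
    ext q
    simp only [Set.mem_iInter, Set.mem_setOf_eq]
    constructor
    · intro hq
      by_contra hne
      have hpos : 0 < τ q := lt_of_le_of_ne (hτ0 q) (Ne.symm hne)
      obtain ⟨k, hk⟩ := exists_nat_gt (2 / τ q)
      have hk1 : 2 / τ q < (k : ℝ) + 1 := lt_trans hk (by linarith)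
      have := hq k
      have : 2 / ((k : ℝ) + 1) < τ q := by
        rw [div_lt_iff₀ (by positivity)]
        rw [div_lt_iff₀ hpos] at hk1
        linarith
      linarith [hq k]
    · intro hq k
      rw [hq]
      positivity
  have htend : Tendsto (fun k : ℕ => νstar {q | τ q ≤ 2 / ((k : ℝ) + 1)}) atTop (nhds 0) := by
    have := tendsto_measure_iInter_atTop (μ := νstar)
      (s := fun k : ℕ => {q | τ q ≤ 2 / ((k : ℝ) + 1)})
      (fun k => (measurableSet_le hτcont.measurable measurable_const).nullMeasurableSet)
      hAnti ⟨0, measure_ne_top _ _⟩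
    rw [hiInter, hνstarnull] at this
    exact this
  have hofpos : (0 : ENNReal) < ENNReal.ofReal (ε / (2 * C)) :=
    ENNReal.ofReal_pos.mpr (by positivity)
  obtain ⟨k₀, hk₀⟩ := (htend.eventually_lt_const hofpos).exists
  refine ⟨k₀ + 1, Nat.succ_pos _, ?_, ?_⟩
  · -- part (a)
    have hcast : (1 : ℝ) / ((k₀ + 1 : ℕ) : ℝ) = 1 / ((k₀ : ℝ) + 1) := by push_cast; ring
    have hb := key νstar inferInstance (1 / ((k₀ : ℝ) + 1)) (by positivity)
    have hsub : νstar {q | τ q ≤ 1 / ((k₀ : ℝ) + 1)} ≤ νstar {q | τ q ≤ 2 / ((k₀ : ℝ) + 1)} := by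
      apply measure_mono
      intro q hq
      simp only [Set.mem_setOf_eq] at hq ⊢
      refine le_trans hq ?_
      gcongr
      norm_num
    have htr : (νstar {q | τ q ≤ 1 / ((k₀ : ℝ) + 1)}).toReal ≤ ε / (2 * C) := by
      refine ENNReal.toReal_le_of_le_ofReal (by positivity) (le_of_lt (lt_of_le_of_lt hsub hk₀))
    calc |(∫ q, Set.indicator {q | 1 / ((k₀ + 1 : ℕ) : ℝ) < τ q} (fun q => g q / τ q) q ∂νstar) -
        ∫ q in {q | 0 < τ q}, g q / τ q ∂νstar|
        ≤ C * (νstar {q | τ q ≤ 1 / ((k₀ : ℝ) + 1)}).toReal := by rw [hcast]; exact hb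
      _ ≤ C * (ε / (2 * C)) := mul_le_mul_of_nonneg_left htr hC.le
      _ = ε / 2 := by field_simp
      _ ≤ ε := by linarith
  · -- part (b)
    set K : ℝ := (k₀ : ℝ) + 1 with hKdef
    have hKpos : (0:ℝ) < K := by positivity
    set f : 𝒟 → ℝ := fun q => max 0 (min 1 (2 - K * τ q)) with hfdef
    have hfc : Continuous f :=
      continuous_const.max (continuous_const.min (continuous_const.sub
        (continuous_const.mul hτcont)))
    have hf0 : ∀ q, 0 ≤ f q := fun q => le_max_left _ _
    have hf1 : ∀ q, f q ≤ 1 := fun q => max_le (by norm_num) (min_le_left _ _)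
    have hfb : ∃ B, ∀ q, |f q| ≤ B :=
      ⟨1, fun q => abs_le.mpr ⟨by linarith [hf0 q], hf1 q⟩⟩
    have hfintegr : ∀ (μ : Measure 𝒟), IsProbabilityMeasure μ → Integrable f μ := by
      intro μ hμ
      haveI := hμ
      exact (integrable_const (1:ℝ)).mono' hfc.aestronglyMeasurable
        (Eventually.of_forall fun q => by
          rw [Real.norm_eq_abs]; exact abs_le.mpr ⟨by linarith [hf0 q], hf1 q⟩)
    have hms1 : MeasurableSet {q | τ q ≤ 1 / K} :=
      measurableSet_le hτcont.measurable measurable_const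
    have hms2 : MeasurableSet {q | τ q ≤ 2 / K} :=
      measurableSet_le hτcont.measurable measurable_const
    have hind_le : ∀ q, Set.indicator {q | τ q ≤ 1 / K} (fun _ => (1:ℝ)) q ≤ f q := by
      intro q
      by_cases hq : q ∈ {q | τ q ≤ 1 / K}
      · rw [Set.indicator_of_mem hq]
        rw [Set.mem_setOf_eq] at hq
        have h1 : K * τ q ≤ 1 := by
          have := mul_le_mul_of_nonneg_left hq hKpos.le
          rwa [mul_one_div, div_self hKpos.ne'] at this
        exact le_max_of_le_right (le_min le_rfl (by linarith))
      · rw [Set.indicator_of_notMem hq]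
        exact hf0 q
    have hle_ind : ∀ q, f q ≤ Set.indicator {q | τ q ≤ 2 / K} (fun _ => (1:ℝ)) q := by
      intro q
      by_cases hq : q ∈ {q | τ q ≤ 2 / K}
      · rw [Set.indicator_of_mem hq]; exact hf1 q
      · rw [Set.indicator_of_notMem hq]
        simp only [Set.mem_setOf_eq, not_le] at hq
        have h2 : 2 < K * τ q := by
          rw [div_lt_iff₀ hKpos] at hq
          linarith [mul_comm (τ q) K]
        refine le_of_eq (max_eq_left ?_)
        exact (min_le_right _ _).trans (by linarith)
    have hmeas_le : ∀ (μ : Measure 𝒟), IsProbabilityMeasure μ →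
        (μ {q | τ q ≤ 1 / K}).toReal ≤ ∫ q, f q ∂μ := by
      intro μ hμ
      haveI := hμ
      have h1 : (μ {q | τ q ≤ 1 / K}).toReal
          = ∫ q, Set.indicator {q | τ q ≤ 1 / K} (fun _ => (1:ℝ)) q ∂μ := by
        rw [integral_indicator hms1, setIntegral_const, smul_eq_mul, mul_one]
        rfl
      rw [h1]
      exact integral_mono ((integrable_const 1).indicator hms1) (hfintegr μ hμ) hind_le
    have hint_le : ∫ q, f q ∂νstar ≤ (νstar {q | τ q ≤ 2 / K}).toReal := by
      have h2 : (νstar {q | τ q ≤ 2 / K}).toReal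
          = ∫ q, Set.indicator {q | τ q ≤ 2 / K} (fun _ => (1:ℝ)) q ∂νstar := by
        rw [integral_indicator hms2, setIntegral_const, smul_eq_mul, mul_one]
        rfl
      rw [h2]
      exact integral_mono (hfintegr νstar inferInstance)
        ((integrable_const 1).indicator hms2) hle_ind
    have htoReal2 : (νstar {q | τ q ≤ 2 / K}).toReal ≤ ε / (2 * C) :=
      ENNReal.toReal_le_of_le_ofReal (by positivity) hk₀.le
    have hlim_lt : C * ∫ q, f q ∂νstar < ε := by
      have : C * ∫ q, f q ∂νstar ≤ C * (ε / (2 * C)) :=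
        mul_le_mul_of_nonneg_left (le_trans hint_le htoReal2) hC.le
      have heq : C * (ε / (2 * C)) = ε / 2 := by field_simp
      rw [heq] at this
      linarith
    have htb : Tendsto (fun i => C * ∫ q, f q ∂(ν i)) atTop
        (nhds (C * ∫ q, f q ∂νstar)) := (hconv f hfc hfb).const_mul C
    have hev_b : ∀ᶠ i in atTop, C * ∫ q, f q ∂(ν i) ≤ ε :=
      (htb.eventually_lt_const hlim_lt).mono fun i hi => hi.le
    have hcast : (1 : ℝ) / ((k₀ + 1 : ℕ) : ℝ) = 1 / K := by
      rw [hKdef]; push_cast; ring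
    have ha_le_b : ∀ i,
        |(∫ q, Set.indicator {q | 1 / ((k₀ + 1 : ℕ) : ℝ) < τ q} (fun q => g q / τ q) q ∂(ν i)) -
          ∫ q in {q | 0 < τ q}, g q / τ q ∂(ν i)| ≤ C * ∫ q, f q ∂(ν i) := by
      intro i
      calc |(∫ q, Set.indicator {q | 1 / ((k₀ + 1 : ℕ) : ℝ) < τ q} (fun q => g q / τ q) q ∂(ν i)) -
          ∫ q in {q | 0 < τ q}, g q / τ q ∂(ν i)|
          ≤ C * ((ν i) {q | τ q ≤ 1 / K}).toReal := by
            rw [hcast]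
            exact key (ν i) inferInstance (1 / K) (by positivity)
        _ ≤ C * ∫ q, f q ∂(ν i) :=
            mul_le_mul_of_nonneg_left (hmeas_le (ν i) inferInstance) hC.le
    have hev : ∀ᶠ i in atTop,
        |(∫ q, Set.indicator {q | 1 / ((k₀ + 1 : ℕ) : ℝ) < τ q} (fun q => g q / τ q) q ∂(ν i)) -
          ∫ q in {q | 0 < τ q}, g q / τ q ∂(ν i)| ≤ ε :=
      hev_b.mono fun i hi => le_trans (ha_le_b i) hi
    have hcob : IsCoboundedUnder (· ≤ ·) atTop (fun i =>
        |(∫ q, Set.indicator {q | 1 / ((k₀ + 1 : ℕ) : ℝ) < τ q} (fun q => g q / τ q) q ∂(ν i)) -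
          ∫ q in {q | 0 < τ q}, g q / τ q ∂(ν i)|) :=
      isCoboundedUnder_le_of_le atTop (x := 0) (fun i => abs_nonneg _)
    exact limsup_le_of_le hcob hev
end
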